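/- arXiv:1807.02093 — 8 statements merged into one kernel-verified Lean document; each statement's English description precedes it below -/
import Mathlib

section
/- Let m ≥ 2 and let x₁, …, xₘ be affinely independent points of a real Hilbert space H. Let G = G(x₂ − x₁, …, xₘ − x₁) be the Gram matrix of the differences (which is invertible since these differences are linearly independent), and define (α₁, …, α_{m−1})ᵀ = (1/2) G⁻¹ (‖x₂ − x₁‖², …, ‖xₘ − x₁‖²)ᵀ. Then the point p = x₁ + Σ_{i=1}^{m−1} αᵢ (x_{i+1} − x₁) lies in aff{x₁, …, xₘ} and satisfies ‖p − x₁‖ = ⋯ = ‖p − xₘ‖; that is, p is the circumcenter of {x₁, …, xₘ}. -/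
open RealInnerProductSpace

/-- Explicit formula for the circumcenter of `m = n + 1 ≥ 2` affinely
independent points `x 0, …, x n` of a real Hilbert space.  With `G` the Gram matrix of
the differences `x (i+1) − x 0` and
`α = (1/2) G⁻¹ (‖x 1 − x 0‖², …, ‖x n − x 0‖²)ᵀ`,
the point `p = x 0 + Σᵢ αᵢ (x (i+1) − x 0)` lies in the affine hull of the points and is
equidistant from all of them, i.e. it is the circumcenter. -/
theorem circumcenter_formula_gram {H : Type*} [NormedAddCommGroup H]
    [InnerProductSpace ℝ H] [CompleteSpace H] (n : ℕ) (hn : 1 ≤ n)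
    (x : Fin (n + 1) → H) (hx : AffineIndependent ℝ x)
    (G : Matrix (Fin n) (Fin n) ℝ)
    (hG : ∀ i j, G i j = ⟪x i.succ - x 0, x j.succ - x 0⟫)
    (α : Fin n → ℝ)
    (hα : α = (2 : ℝ)⁻¹ • G⁻¹.mulVec fun i => ‖x i.succ - x 0‖ ^ 2) :
    (x 0 + ∑ i, α i • (x i.succ - x 0)) ∈ affineSpan ℝ (Set.range x) ∧
      ∃ r : ℝ, ∀ i, dist (x 0 + ∑ i, α i • (x i.succ - x 0)) (x i) = r := by
  set v : Fin n → H := fun i => x i.succ - x 0 with hv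
  set w : H := ∑ i, α i • v i with hw
  -- linear independence of the differences
  have hli : LinearIndependent ℝ v := by
    have h1 := (affineIndependent_iff_linearIndependent_vsub ℝ x 0).1 hx
    have h2 : LinearIndependent ℝ
        (fun i : Fin n => (fun i : {i : Fin (n+1) // i ≠ 0} => x i -ᵥ x 0)
          ⟨i.succ, Fin.succ_ne_zero i⟩) :=
      h1.comp _ (fun i j hij => by
        have := congrArg Subtype.val hij
        simpa [Fin.succ_inj] using this)
    simpa [hv, vsub_eq_sub] using h2
  -- G is invertible
  have hGunit : IsUnit G := by
    rw [← Matrix.mulVec_injective_iff_isUnit]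
    intro a b hab
    have hzero : G.mulVec (a - b) = 0 := by
      rw [Matrix.mulVec_sub, hab, sub_self]
    have hsum : ∑ j, (a - b) j • v j = 0 := by
      have hinner : ∀ i, ⟪v i, ∑ j, (a - b) j • v j⟫ = 0 := by
        intro i
        have := congrFun hzero i
        simp only [Matrix.mulVec, dotProduct, hG] at this
        rw [inner_sum]
        simpa [real_inner_smul_right, mul_comm] using this
      have : ⟪∑ i, (a - b) i • v i, ∑ j, (a - b) j • v j⟫ = 0 := by
        rw [sum_inner]
        exact Finset.sum_eq_zero fun i _ => by
          rw [real_inner_smul_left, hinner i, mul_zero]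
      exact inner_self_eq_zero.1 this
    have := Fintype.linearIndependent_iff.1 hli (a - b) hsum
    funext i
    have := this i
    simpa [sub_eq_zero] using this
  -- key identity: G.mulVec α = (1/2) • (norms squared)
  have hkey : ∀ i, ⟪w, v i⟫ = 2⁻¹ * ‖v i‖ ^ 2 := by
    intro i
    have hGα : G.mulVec α = (2 : ℝ)⁻¹ • fun i => ‖v i‖ ^ 2 := by
      rw [hα, Matrix.mulVec_smul, Matrix.mulVec_mulVec,
        Matrix.mul_nonsing_inv _ (((Matrix.isUnit_iff_isUnit_det G).1 hGunit)),
        Matrix.one_mulVec]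
    have := congrFun hGα i
    simp only [Matrix.mulVec, dotProduct, hG, Pi.smul_apply, smul_eq_mul] at this
    rw [hw, sum_inner]
    rw [← this]
    exact Finset.sum_congr rfl fun j _ => by
      rw [real_inner_smul_left, real_inner_comm]; ring
  constructor
  · have hx0 : x 0 ∈ affineSpan ℝ (Set.range x) := mem_affineSpan ℝ ⟨0, rfl⟩
    have hwmem : w ∈ (affineSpan ℝ (Set.range x)).direction := by
      rw [direction_affineSpan]
      exact Submodule.sum_mem _ fun i _ => Submodule.smul_mem _ _
        (vsub_mem_vectorSpan ℝ ⟨i.succ, rfl⟩ ⟨0, rfl⟩)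
    have := AffineSubspace.vadd_mem_of_mem_direction hwmem hx0
    simpa [add_comm] using this
  · refine ⟨‖w‖, fun i => ?_⟩
    induction i using Fin.cases with
    | zero => simp [dist_eq_norm, hw]
    | succ j =>
      have : x 0 + w - x j.succ = w - v j := by rw [hv]; beta_reduce; abel_nf
      rw [dist_eq_norm, this, ← Real.sqrt_sq (norm_nonneg (w - v j)),
        ← Real.sqrt_sq (norm_nonneg w)]
      congr 1
      rw [norm_sub_sq_real, hkey j]
      ring
end

section
/- Let S be a nonempty finite subset of a real Hilbert space H and suppose p ∈ aff(S) is equidistant from all points of S (so p is the circumcenter of S). Let K ⊆ S be nonempty with aff(K) = aff(S). Then p ∈ aff(K), p is equidistant from all points of K, and p is the unique point of aff(K) that is equidistant from all points of K; that is, the circumcenter of K exists and equals the circumcenter of S. -/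
/-- If `p` is the circumcenter of a nonempty finite set `S` in a real
Hilbert space, and `K ⊆ S` is nonempty with `aff(K) = aff(S)`, then `p ∈ aff(K)`, `p` is
equidistant from all points of `K`, and `p` is the unique such point; i.e. the
circumcenter of `K` exists and equals the circumcenter of `S`. -/
theorem circumcenter_of_spanning_subset {H : Type*} [NormedAddCommGroup H]
    [InnerProductSpace ℝ H] [CompleteSpace H] (S K : Set H) (hfin : S.Finite)
    (hSne : S.Nonempty) (hKS : K ⊆ S) (hKne : K.Nonempty)
    (haff : affineSpan ℝ K = affineSpan ℝ S) (p : H)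
    (hp : p ∈ affineSpan ℝ S) (hpr : ∃ r : ℝ, ∀ s ∈ S, dist p s = r) :
    p ∈ affineSpan ℝ K ∧ (∃ r : ℝ, ∀ s ∈ K, dist p s = r) ∧
      ∀ q : H, q ∈ affineSpan ℝ K → (∃ r : ℝ, ∀ s ∈ K, dist q s = r) → q = p := by
  obtain ⟨r, hr⟩ := hpr
  have hpK : p ∈ affineSpan ℝ K := haff ▸ hp
  refine ⟨hpK, ⟨r, fun s hs => hr s (hKS hs)⟩, ?_⟩
  rintro q hq ⟨r', hr'⟩
  have hv : q -ᵥ p ∈ vectorSpan ℝ K := by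
    rw [← direction_affineSpan]
    exact AffineSubspace.vsub_mem_direction hq hpK
  have horth : vectorSpan ℝ K ≤ (Submodule.span ℝ {q -ᵥ p})ᗮ := by
    rw [vectorSpan_def]
    apply Submodule.span_le.2
    rintro u ⟨a, ha, b, hb, rfl⟩
    show a -ᵥ b ∈ (Submodule.span ℝ {q -ᵥ p})ᗮ
    rw [Submodule.mem_orthogonal']
    intro v hv
    rw [Submodule.mem_span_singleton] at hv
    obtain ⟨c, rfl⟩ := hv
    have h1 : dist b p = dist a p := by
      rw [dist_comm b p, dist_comm a p, hr b (hKS hb), hr a (hKS ha)]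
    have h2 : dist b q = dist a q := by
      rw [dist_comm b q, dist_comm a q, hr' b hb, hr' a ha]
    have h3 := EuclideanGeometry.inner_vsub_vsub_of_dist_eq_of_dist_eq h1 h2
    rw [real_inner_smul_right, real_inner_comm, h3, mul_zero]
  have : (inner ℝ (q -ᵥ p) (q -ᵥ p) : ℝ) = 0 := by
    exact (Submodule.mem_orthogonal' _ _).1 (horth hv) _ (Submodule.mem_span_singleton_self _)
  have : q -ᵥ p = 0 := by
    rwa [inner_self_eq_zero] at this
  exact sub_eq_zero.1 this
end

section
/- Let S = {x₁, …, xₘ} be a finite subset of a real Hilbert space H admitting a circumcenter p (i.e., p ∈ aff(S) and ‖p − x₁‖ = ⋯ = ‖p − xₘ‖). Suppose x_{i₁}, …, x_{i_t} are elements of S such that x₁, x_{i₁}, …, x_{i_t} are affinely independent and aff{x₁, x_{i₁}, …, x_{i_t}} = aff(S). Define (γ₁, …, γ_t)ᵀ = (1/2) G(x_{i₁} − x₁, …, x_{i_t} − x₁)⁻¹ (‖x_{i₁} − x₁‖², …, ‖x_{i_t} − x₁‖²)ᵀ. Then p = x₁ + Σ_{j=1}^{t} γⱼ (x_{iⱼ}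 − x₁). -/
open RealInnerProductSpace

/-- Let `S = {x 0, …, x m}` admit a circumcenter `p`.  If
`x (idx 1), …, x (idx t)` are elements of `S` such that
`x 0, x (idx 1), …, x (idx t)` are affinely independent and span the same affine hull
as `S`, then, with `γ = (1/2) G(x (idx j) − x 0)⁻¹ (‖x (idx j) − x 0‖²)ⱼ`,
one has `p = x 0 + Σⱼ γⱼ (x (idx j) − x 0)`. -/
theorem circumcenter_eq_formula_on_spanning_subfamily {H : Type*} [NormedAddCommGroup H]
    [InnerProductSpace ℝ H] [CompleteSpace H] (m t : ℕ) (x : Fin (m + 1) → H)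
    (idx : Fin t → Fin (m + 1))
    (haff : AffineIndependent ℝ (Fin.cons (x 0) (fun j => x (idx j)) : Fin (t + 1) → H))
    (hspan : affineSpan ℝ (Set.range (Fin.cons (x 0) (fun j => x (idx j)) : Fin (t + 1) → H)) =
      affineSpan ℝ (Set.range x))
    (p : H) (hp : p ∈ affineSpan ℝ (Set.range x))
    (hpr : ∃ r : ℝ, ∀ i, dist p (x i) = r)
    (γ : Fin t → ℝ)
    (hγ : γ = (2 : ℝ)⁻¹ • ((Matrix.of fun i j : Fin t =>
        ⟪x (idx i) - x 0, x (idx j) - x 0⟫ : Matrix (Fin t) (Fin t) ℝ)⁻¹).mulVec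
        fun j => ‖x (idx j) - x 0‖ ^ 2) :
    p = x 0 + ∑ j, γ j • (x (idx j) - x 0) := by
  classical
  set f : Fin (t + 1) → H := (Fin.cons (x 0) (fun j => x (idx j)) : Fin (t + 1) → H) with hf
  set v : Fin t → H := fun j => x (idx j) - x 0 with hv
  set G : Matrix (Fin t) (Fin t) ℝ :=
    (Matrix.of fun i j : Fin t => ⟪x (idx i) - x 0, x (idx j) - x 0⟫) with hGdef
  have hGvv : ∀ i j, G i j = ⟪v i, v j⟫ := fun _ _ => rfl
  set b : Fin t → ℝ := fun j => ‖x (idx j) - x 0‖ ^ 2 with hb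
  -- linear independence of v
  have hli : LinearIndependent ℝ v := by
    have h := (affineIndependent_iff_linearIndependent_vsub ℝ f 0).mp haff
    have h2 := h.comp
      (fun j : Fin t => (⟨j.succ, Fin.succ_ne_zero j⟩ : {i : Fin (t+1) // i ≠ 0}))
      (fun a b hab => by
        have := congrArg (fun s : {i : Fin (t+1) // i ≠ 0} => s.1) hab
        simpa [Fin.succ_inj] using this)
    exact h2
  -- decompose p - x 0
  have hx0 : x 0 ∈ affineSpan ℝ (Set.range x) := mem_affineSpan ℝ ⟨0, rfl⟩
  have hdmem : p - x 0 ∈ vectorSpan ℝ (Set.range f) := by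
    rw [← direction_affineSpan, hspan]
    exact AffineSubspace.vsub_mem_direction hp hx0
  have hspanv : vectorSpan ℝ (Set.range f) = Submodule.span ℝ (Set.range v) := by
    rw [vectorSpan_eq_span_vsub_set_right ℝ (Set.mem_range_self (0 : Fin (t+1)) : f 0 ∈ _)]
    have h1 : (fun y => y -ᵥ f 0) '' Set.range f = Set.range (fun i => f i - f 0) := by
      rw [← Set.range_comp]; rfl
    rw [h1]
    have h2 : (fun i => f i - f 0) = Fin.cons 0 v := by
      funext i
      refine Fin.cases ?_ (fun j => ?_) i <;> simp [hf, hv]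
    rw [h2, Fin.range_cons, Submodule.span_insert_zero]
  rw [hspanv] at hdmem
  obtain ⟨c, hc⟩ := (Submodule.mem_span_range_iff_exists_fun ℝ).mp hdmem
  -- equidistance
  obtain ⟨r, hr⟩ := hpr
  have hinner : ∀ j, ⟪v j, p - x 0⟫ = 2⁻¹ * ‖v j‖ ^ 2 := by
    intro j
    have h1 : ‖p - x (idx j)‖ = ‖p - x 0‖ := by
      rw [← dist_eq_norm, ← dist_eq_norm, hr, hr]
    have h2 : p - x (idx j) = (p - x 0) - v j := by
      simp [hv]
    have h3 : ‖(p - x 0) - v j‖ ^ 2 = ‖p - x 0‖ ^ 2 := by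
      rw [← h2, h1]
    rw [norm_sub_sq_real] at h3
    have := real_inner_comm (v j) (p - x 0)
    nlinarith [h3, this]
  -- G * c = 2⁻¹ • b
  have hGc : G.mulVec c = (2 : ℝ)⁻¹ • b := by
    funext j
    have : G.mulVec c j = ⟪v j, ∑ k, c k • v k⟫ := by
      rw [inner_sum]
      simp only [Matrix.mulVec, dotProduct, hGvv, real_inner_smul_right]
      exact Finset.sum_congr rfl fun k _ => mul_comm _ _
    rw [this, hc, hinner j]
    simp [hb, hv]
  -- invertibility of G
  have hdet : IsUnit G.det := by
    rw [isUnit_iff_ne_zero]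
    intro h0
    obtain ⟨d, hd0, hd⟩ := (Matrix.exists_mulVec_eq_zero_iff).mpr h0
    have hsum : ∑ k, d k • v k = 0 := by
      have hnorm : ⟪∑ k, d k • v k, ∑ k, d k • v k⟫ = 0 := by
        rw [inner_sum]
        have : ∀ j, ⟪∑ k, d k • v k, v j⟫ = G.mulVec d j := by
          intro j
          rw [sum_inner]
          simp only [Matrix.mulVec, dotProduct, hGvv, real_inner_smul_left]
          exact Finset.sum_congr rfl fun k _ => by rw [real_inner_comm]; ring
        calc ∑ j, ⟪∑ k, d k • v k, d j • v j⟫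
            = ∑ j, d j * G.mulVec d j := by
              refine Finset.sum_congr rfl fun j _ => ?_
              rw [real_inner_smul_right, this j]
          _ = 0 := by simp [hd]
      exact inner_self_eq_zero.mp hnorm
    exact hd0 (funext fun k => (Fintype.linearIndependent_iff.mp hli d hsum k))
  -- conclude γ = c
  have hγc : γ = c := by
    rw [hγ]
    have h1 : (2 : ℝ)⁻¹ • (G⁻¹.mulVec b) = G⁻¹.mulVec ((2 : ℝ)⁻¹ • b) := by
      rw [Matrix.mulVec_smul]
    rw [h1, ← hGc, Matrix.mulVec_mulVec, Matrix.nonsing_inv_mul G hdet, Matrix.one_mulVec]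
  rw [hγc]
  have : p = x 0 + ∑ k, c k • v k := by rw [hc]; abel
  simpa [hv] using this
end

section
/- Let m ≥ 2 and let x₁, …, xₘ be affinely independent points of a real Hilbert space H. Let A = G(x₂ − x₁, …, xₘ − x₁) be the Gram matrix of the differences, δ = det(A) (which is nonzero), a = (‖x₂ − x₁‖², …, ‖xₘ − x₁‖²)ᵀ, and for each i ∈ {1, …, m−1} let Aᵢ be the matrix obtained from A by replacing its i-th column with a, and set αᵢ = det(Aᵢ)/(2δ). Then the circumcenter of {x₁, …, xₘ} equals (1 − Σ_{i=1}^{m−1} αᵢ) x₁ + Σ_{i=1}^{m−1} αᵢ x_{i+1}; that is, this point lies in aff{x₁, …, xₘ} and is equidistant from x₁, …, xₘ. -/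
open RealInnerProductSpace

/-- Cramer-rule formula for the circumcenter: for `m = n + 1 ≥ 2`
affinely independent points `x 0, …, x n`, with `A` the Gram matrix of the differences,
`δ = det A` (nonzero), `a` the vector of squared norms of the differences, `Aᵢ` the
matrix `A` with column `i` replaced by `a`, and `αᵢ = det Aᵢ / (2δ)`, the point
`(1 − Σ αᵢ) x 0 + Σ αᵢ x (i+1)` lies in the affine hull and is equidistant from all the
points, i.e. it is the circumcenter. -/
theorem circumcenter_cramer_formula {H : Type*} [NormedAddCommGroup H]
    [InnerProductSpace ℝ H] [CompleteSpace H] (n : ℕ) (hn : 1 ≤ n)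
    (x : Fin (n + 1) → H) (hx : AffineIndependent ℝ x)
    (A : Matrix (Fin n) (Fin n) ℝ)
    (hA : ∀ i j, A i j = ⟪x i.succ - x 0, x j.succ - x 0⟫)
    (a : Fin n → ℝ) (ha : ∀ i, a i = ‖x i.succ - x 0‖ ^ 2)
    (α : Fin n → ℝ) (hα : ∀ i, α i = (A.updateCol i a).det / (2 * A.det)) :
    A.det ≠ 0 ∧
      ((1 - ∑ i, α i) • x 0 + ∑ i, α i • x i.succ) ∈ affineSpan ℝ (Set.range x) ∧
      ∃ r : ℝ, ∀ i, dist ((1 - ∑ i, α i) • x 0 + ∑ i, α i • x i.succ) (x i) = r := by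
  classical
  set v : Fin n → H := fun i => x i.succ - x 0 with hv
  -- linear independence of the differences
  have hli : LinearIndependent ℝ v := by
    have h := (affineIndependent_iff_linearIndependent_vsub ℝ x 0).mp hx
    have : v = (fun i : {i : Fin (n+1) // i ≠ 0} => x i -ᵥ x 0) ∘
        (fun i : Fin n => (⟨i.succ, Fin.succ_ne_zero i⟩ : {i : Fin (n+1) // i ≠ 0})) := by
      funext i; simp [hv]
    rw [this]
    exact h.comp _ (fun i j hij =>
      Fin.succ_injective n (congrArg Subtype.val hij))
  -- det nonzero
  have hdet : A.det ≠ 0 := by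
    intro h0
    obtain ⟨c, hc, hmc⟩ := Matrix.exists_mulVec_eq_zero_iff.mpr h0
    have hz : (∑ i, c i • v i) = 0 := by
      have hnorm : ⟪∑ i, c i • v i, ∑ j, c j • v j⟫ = 0 := by
        rw [sum_inner]
        have : ∀ i, ⟪c i • v i, ∑ j, c j • v j⟫ = c i * A.mulVec c i := by
          intro i
          rw [inner_sum, Matrix.mulVec, dotProduct, Finset.mul_sum]
          congr 1; funext j
          rw [real_inner_smul_left, real_inner_smul_right, hA i j]
          ring
        simp [this, hmc]
      exact inner_self_eq_zero.mp hnorm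
    have := linearIndependent_iff'.mp hli Finset.univ c hz
    exact hc (funext fun i => this i (Finset.mem_univ i))
  refine ⟨hdet, ?_, ?_⟩
  · -- membership in the affine span
    have hx0 : x 0 ∈ affineSpan ℝ (Set.range x) :=
      mem_affineSpan ℝ (Set.mem_range_self 0)
    have hdir : (∑ i, α i • v i) ∈ (affineSpan ℝ (Set.range x)).direction := by
      refine Submodule.sum_mem _ fun i _ => Submodule.smul_mem _ _ ?_
      exact AffineSubspace.vsub_mem_direction
        (mem_affineSpan ℝ (Set.mem_range_self i.succ)) hx0
    have hmem := AffineSubspace.vadd_mem_of_mem_direction hdir hx0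
    have hpe : (∑ i, α i • v i) +ᵥ x 0
        = (1 - ∑ i, α i) • x 0 + ∑ i, α i • x i.succ := by
      simp only [hv, vadd_eq_add, smul_sub, sub_smul, one_smul,
        Finset.sum_sub_distrib, ← Finset.sum_smul]
      abel
    rwa [hpe] at hmem
  · -- equidistance
    set p : H := (1 - ∑ i, α i) • x 0 + ∑ i, α i • x i.succ with hp
    have hpd : p - x 0 = ∑ i, α i • v i := by
      simp only [hp, hv, smul_sub, sub_smul, one_smul,
        Finset.sum_sub_distrib, ← Finset.sum_smul]
      abel
    -- key: A *ᵥ α = a / 2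
    have hmv : ∀ j, A.mulVec α j = a j / 2 := by
      have hαc : α = (2 * A.det)⁻¹ • Matrix.cramer A a := by
        funext i; rw [hα i, ← Matrix.cramer_apply]
        simp [div_eq_inv_mul]
      intro j
      rw [hαc, Matrix.mulVec_smul, Matrix.mulVec_cramer]
      have h2 : (2 : ℝ) * A.det ≠ 0 := mul_ne_zero two_ne_zero hdet
      field_simp
      simp only [Pi.smul_apply, smul_eq_mul]
      field_simp
    -- symmetry of A
    have hsymm : ∀ i j, A i j = A j i := fun i j => by
      rw [hA, hA]; exact real_inner_comm _ _
    have hkey : ∀ j, ⟪p - x 0, v j⟫ = a j / 2 := by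
      intro j
      rw [hpd, sum_inner, ← hmv j]
      rw [Matrix.mulVec, dotProduct]
      congr 1; funext i
      simp only [hv]
      rw [real_inner_smul_left, ← hA i j, hsymm i j]
      ring
    refine ⟨dist p (x 0), fun i => ?_⟩
    induction i using Fin.cases with
    | zero => rfl
    | succ j =>
      have h1 : dist p (x j.succ) ^ 2 = dist p (x 0) ^ 2 := by
        rw [dist_eq_norm, dist_eq_norm]
        have : p - x j.succ = (p - x 0) - v j := by simp only [hv]; abel
        rw [this, norm_sub_sq_real, hkey j, ha j]
        ring
      rw [← Real.sqrt_sq (dist_nonneg (x := p) (y := x j.succ)),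
        ← Real.sqrt_sq (dist_nonneg (x := p) (y := x 0)), h1]
end

section
/- Let S = {x₁, …, xₘ} be a finite subset of a real Hilbert space H admitting a circumcenter p (p ∈ aff(S) and equidistant from all points of S). Let t = dim span{x₂ − x₁, …, xₘ − x₁}, and suppose x_{i₁}, …, x_{i_t} are elements of S such that (x_{i₁} − x₁, …, x_{i_t} − x₁) is a basis of span{x₂ − x₁, …, xₘ − x₁}. Let sequences x₁^{(k)} → x₁ and x_{iⱼ}^{(k)} → x_{iⱼ} (j = 1, …, t) in H. Then there exists N ∈ ℕ such that for all k ≥ N the points x₁^{(k)}, x_{i₁}^{(k)}, …, x_{i_t}^{(k)} are affinely independent — hence admit a unique circumcenter p_k — and p_k → p as k → ∞. -/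
open Filter

open Matrix

section CCHelpers

variable {H : Type*} [NormedAddCommGroup H] [InnerProductSpace ℝ H] {t : ℕ}

noncomputable def ccGram (v : Fin (t + 1) → H) : Matrix (Fin t) (Fin t) ℝ :=
  Matrix.of fun i j => (inner ℝ (v i.succ - v 0) (v j.succ - v 0) : ℝ)

noncomputable def ccB (v : Fin (t + 1) → H) : Fin t → ℝ :=
  fun i => ‖v i.succ - v 0‖ ^ 2 / 2

noncomputable def ccC (v : Fin (t + 1) → H) : H :=
  v 0 + ∑ j : Fin t, ((ccGram v)⁻¹ *ᵥ ccB v) j • (v j.succ - v 0)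

lemma ccGram_mulVec (v : Fin (t + 1) → H) (c : Fin t → ℝ) (i : Fin t) :
    (ccGram v *ᵥ c) i = (inner ℝ (v i.succ - v 0) (∑ j : Fin t, c j • (v j.succ - v 0)) : ℝ) := by
  simp [ccGram, Matrix.mulVec, dotProduct, inner_sum, real_inner_smul_right, mul_comm]

lemma ccGram_isUnit {v : Fin (t + 1) → H}
    (h : LinearIndependent ℝ fun j : Fin t => v j.succ - v 0) : IsUnit (ccGram v) := by
  rw [← Matrix.mulVec_injective_iff_isUnit]
  have hker : ∀ c : Fin t → ℝ, ccGram v *ᵥ c = 0 → c = 0 := by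
    intro c hc
    have hz : (∑ j : Fin t, c j • (v j.succ - v 0)) = 0 := by
      have hnorm : (inner ℝ (∑ j : Fin t, c j • (v j.succ - v 0))
          (∑ j : Fin t, c j • (v j.succ - v 0)) : ℝ) = 0 := by
        rw [sum_inner]
        refine Finset.sum_eq_zero fun i _ => ?_
        rw [real_inner_smul_left, ← ccGram_mulVec, hc]
        simp
      exact inner_self_eq_zero.mp hnorm
    exact funext ((Fintype.linearIndependent_iff.mp h) c hz)
  intro a b hab
  have : ccGram v *ᵥ (a - b) = 0 := by
    rw [Matrix.mulVec_sub, hab, sub_self]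
  have := hker _ this
  exact sub_eq_zero.mp this

lemma ccLi_of_det_ne_zero {v : Fin (t + 1) → H} (h : (ccGram v).det ≠ 0) :
    LinearIndependent ℝ fun j : Fin t => v j.succ - v 0 := by
  have hu : IsUnit (ccGram v) := (Matrix.isUnit_iff_isUnit_det _).mpr (isUnit_iff_ne_zero.mpr h)
  have hinj := Matrix.mulVec_injective_iff_isUnit.mpr hu
  rw [Fintype.linearIndependent_iff]
  intro c hc
  have h0 : ccGram v *ᵥ c = ccGram v *ᵥ 0 := by
    ext i
    rw [ccGram_mulVec, hc]
    simp
  have := hinj h0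
  intro i; rw [this]; rfl

lemma ccC_inner {v : Fin (t + 1) → H} (h : IsUnit (ccGram v)) (i : Fin t) :
    (inner ℝ (v i.succ - v 0) (ccC v - v 0) : ℝ) = ccB v i := by
  have hdet : IsUnit (ccGram v).det := (Matrix.isUnit_iff_isUnit_det _).mp h
  have hmv : ccGram v *ᵥ ((ccGram v)⁻¹ *ᵥ ccB v) = ccB v := by
    rw [Matrix.mulVec_mulVec, Matrix.mul_nonsing_inv _ hdet, Matrix.one_mulVec]
  have hq : ccC v - v 0 = ∑ j : Fin t, ((ccGram v)⁻¹ *ᵥ ccB v) j • (v j.succ - v 0) := by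
    simp [ccC]
  rw [hq, ← ccGram_mulVec, hmv]

lemma inner_eq_of_dist_eq {v : Fin (t + 1) → H} {c : H} {r : ℝ}
    (h : ∀ j, dist c (v j) = r) (i : Fin t) :
    (inner ℝ (v i.succ - v 0) (c - v 0) : ℝ) = ccB v i := by
  have h1 : ‖c - v i.succ‖ ^ 2 = ‖c - v 0‖ ^ 2 := by
    rw [← dist_eq_norm, ← dist_eq_norm, h i.succ, h 0]
  have h2 : c - v i.succ = (c - v 0) - (v i.succ - v 0) := by abel
  rw [h2, norm_sub_sq_real] at h1
  have h3 := real_inner_comm (c - v 0) (v i.succ - v 0)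
  simp only [ccB]
  linarith

lemma dist_sq_eq {a b : H} (h : ‖a‖ ^ 2 = ‖b‖ ^ 2) : ‖a‖ = ‖b‖ := by
  have := congrArg Real.sqrt h
  rwa [Real.sqrt_sq (norm_nonneg _), Real.sqrt_sq (norm_nonneg _)] at this

lemma dist_ccC {v : Fin (t + 1) → H} (h : IsUnit (ccGram v)) (j : Fin (t + 1)) :
    dist (ccC v) (v j) = dist (ccC v) (v 0) := by
  refine Fin.cases rfl (fun i => ?_) j
  have hin := ccC_inner h i
  have h2 : ccC v - v i.succ = (ccC v - v 0) - (v i.succ - v 0) := by abel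
  have h3 : real_inner_comm (ccC v - v 0) (v i.succ - v 0) = real_inner_comm (ccC v - v 0) (v i.succ - v 0) := rfl
  have h1 : ‖ccC v - v i.succ‖ ^ 2 = ‖ccC v - v 0‖ ^ 2 := by
    rw [h2, norm_sub_sq_real]
    have h4 := real_inner_comm (ccC v - v 0) (v i.succ - v 0)
    simp only [ccB] at hin
    nlinarith [hin, h4]
  rw [dist_eq_norm, dist_eq_norm]
  exact dist_sq_eq h1

lemma vectorSpan_range_succ {n : ℕ} (v : Fin (n + 1) → H) :
    vectorSpan ℝ (Set.range v) =
      Submodule.span ℝ (Set.range fun i : Fin n => v i.succ - v 0) := by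
  rw [vectorSpan_eq_span_vsub_set_right ℝ (Set.mem_range_self 0)]
  apply le_antisymm
  · rw [Submodule.span_le]
    rintro z ⟨_, ⟨i, rfl⟩, rfl⟩
    simp only [vsub_eq_sub, SetLike.mem_coe]
    refine Fin.cases ?_ (fun j => ?_) i
    · simp
    · exact Submodule.subset_span ⟨j, rfl⟩
  · rw [Submodule.span_le]
    rintro z ⟨j, rfl⟩
    exact Submodule.subset_span ⟨v j.succ, ⟨j.succ, rfl⟩, by simp [vsub_eq_sub]⟩

lemma ccC_mem (v : Fin (t + 1) → H) : ccC v ∈ affineSpan ℝ (Set.range v) := by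
  have h0 : v 0 ∈ affineSpan ℝ (Set.range v) := mem_affineSpan ℝ (Set.mem_range_self 0)
  have hd : (∑ j : Fin t, ((ccGram v)⁻¹ *ᵥ ccB v) j • (v j.succ - v 0)) ∈
      (affineSpan ℝ (Set.range v)).direction := by
    rw [direction_affineSpan]
    refine Submodule.sum_mem _ fun j _ => Submodule.smul_mem _ _ ?_
    have : v j.succ -ᵥ v 0 ∈ vectorSpan ℝ (Set.range v) :=
      vsub_mem_vectorSpan ℝ ⟨j.succ, rfl⟩ ⟨0, rfl⟩
    rwa [vsub_eq_sub] at this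
  have := AffineSubspace.vadd_mem_of_mem_direction hd h0
  simpa [ccC, vadd_eq_add, add_comm] using this

lemma cc_unique {v : Fin (t + 1) → H} {a b : H}
    (ha : a ∈ affineSpan ℝ (Set.range v)) (hb : b ∈ affineSpan ℝ (Set.range v))
    (hra : ∃ r : ℝ, ∀ j, dist a (v j) = r) (hrb : ∃ r : ℝ, ∀ j, dist b (v j) = r) :
    a = b := by
  obtain ⟨ra, hra⟩ := hra
  obtain ⟨rb, hrb⟩ := hrb
  have hain := inner_eq_of_dist_eq hra
  have hbin := inner_eq_of_dist_eq hrb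
  have hdiff : a - b ∈ Submodule.span ℝ (Set.range fun i : Fin t => v i.succ - v 0) := by
    have := AffineSubspace.vsub_mem_direction ha hb
    rwa [direction_affineSpan, vsub_eq_sub, vectorSpan_range_succ v] at this
  have horto : ∀ z ∈ Submodule.span ℝ (Set.range fun i : Fin t => v i.succ - v 0),
      (inner ℝ z (a - b) : ℝ) = 0 := by
    intro z hz
    induction hz using Submodule.span_induction with
    | mem z hz =>
      obtain ⟨i, rfl⟩ := hz
      have : a - b = (a - v 0) - (b - v 0) := by abel
      rw [this, inner_sub_right, hain i, hbin i, sub_self]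
    | zero => exact inner_zero_left _
    | add y z _ _ hy hz => rw [inner_add_left, hy, hz, add_zero]
    | smul r y _ hy => rw [real_inner_smul_left, hy, mul_zero]
  have h0 : (inner ℝ (a - b) (a - b) : ℝ) = 0 := horto _ hdiff
  have := inner_self_eq_zero.mp h0
  exact sub_eq_zero.mp this

lemma affineIndependent_of_li {v : Fin (t + 1) → H}
    (h : LinearIndependent ℝ fun j : Fin t => v j.succ - v 0) : AffineIndependent ℝ v := by
  rw [affineIndependent_iff_linearIndependent_vsub ℝ v 0]
  let e : Fin t ≃ {i : Fin (t + 1) // i ≠ 0} :=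
    ⟨fun j => ⟨j.succ, Fin.succ_ne_zero j⟩, fun i => i.1.pred i.2,
      fun j => by simp, fun i => by ext; simp [Fin.succ_pred]⟩
  exact (linearIndependent_equiv' e rfl).mp h

lemma ccGram_continuous : Continuous (fun u : Fin (t + 1) → H => ccGram u) := by
  apply continuous_matrix
  intro i j
  exact Continuous.inner ((continuous_apply i.succ).sub (continuous_apply 0))
    ((continuous_apply j.succ).sub (continuous_apply 0))

lemma ccC_continuousAt {v : Fin (t + 1) → H} (h : IsUnit (ccGram v)) :
    ContinuousAt ccC v := by
  have hdet : (ccGram v).det ≠ 0 := ((Matrix.isUnit_iff_isUnit_det _).mp h).ne_zero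
  have hinv : ContinuousAt (fun u : Fin (t + 1) → H => (ccGram u)⁻¹) v :=
    (continuousAt_matrix_inv _
      (by rw [Ring.inverse_eq_inv']; exact continuousAt_inv₀ hdet)).comp
      ccGram_continuous.continuousAt
  have hb : Continuous (fun u : Fin (t + 1) → H => ccB u) := by
    apply continuous_pi
    intro i
    exact (((continuous_apply i.succ).sub (continuous_apply 0)).norm.pow 2).div_const 2
  have hcoef : ContinuousAt (fun u : Fin (t + 1) → H => (ccGram u)⁻¹ *ᵥ ccB u) v := by
    apply continuousAt_pi.2
    intro i
    show ContinuousAt (fun u : Fin (t + 1) → H => ∑ j : Fin t, (ccGram u)⁻¹ i j * ccB u j) v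
    refine tendsto_finset_sum _ fun j _ => ContinuousAt.mul ?_ ?_
    · have hc : Continuous (fun M : Matrix (Fin t) (Fin t) ℝ => M i j) :=
        (continuous_apply j).comp (continuous_apply i)
      exact hc.continuousAt.comp hinv
    · have hc : Continuous (fun u : Fin (t + 1) → H => ccB u j) :=
        (continuous_apply j).comp hb
      exact hc.continuousAt
  show ContinuousAt
    (fun u : Fin (t + 1) → H => u 0 + ∑ j : Fin t, ((ccGram u)⁻¹ *ᵥ ccB u) j • (u j.succ - u 0)) v
  apply ContinuousAt.add (continuous_apply 0).continuousAt
  exact tendsto_finset_sum _ fun j _ =>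
    ((continuous_apply j).continuousAt.comp hcoef).smul
      (((continuous_apply j.succ).sub (continuous_apply 0)).continuousAt)

end CCHelpers

/-- Let `S = {x 0, …, x m}` admit a circumcenter `p`, let
`x (idx 1), …, x (idx t)` be elements of `S` such that the differences
`x (idx j) − x 0` form a basis of `span{x 1 − x 0, …, x m − x 0}` (so `t` is the
dimension of that span), and let `w k` be a sequence of `(t+1)`-tuples converging to
`(x 0, x (idx 1), …, x (idx t))`.  Then for all sufficiently large `k` the points of
`w k` are affinely independent — hence admit a unique circumcenter `q k` — and
`q k → p`. -/
theorem circumcenter_tendsto_of_basis_subfamily {H : Type*} [NormedAddCommGroup H]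
    [InnerProductSpace ℝ H] [CompleteSpace H] (m t : ℕ) (x : Fin (m + 1) → H)
    (p : H) (hp : p ∈ affineSpan ℝ (Set.range x))
    (hpr : ∃ r : ℝ, ∀ i, dist p (x i) = r)
    (ht : t = Module.finrank ℝ
      (Submodule.span ℝ (Set.range fun i : Fin m => x i.succ - x 0)))
    (idx : Fin t → Fin (m + 1))
    (hli : LinearIndependent ℝ (fun j : Fin t => x (idx j) - x 0))
    (hsp : Submodule.span ℝ (Set.range fun j : Fin t => x (idx j) - x 0) =
      Submodule.span ℝ (Set.range fun i : Fin m => x i.succ - x 0))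
    (w : ℕ → Fin (t + 1) → H)
    (hw : Tendsto w atTop (nhds (Fin.cons (x 0) (fun j => x (idx j)) : Fin (t + 1) → H))) :
    ∃ N : ℕ, ∃ q : ℕ → H,
      (∀ k ≥ N, AffineIndependent ℝ (w k) ∧
        (q k ∈ affineSpan ℝ (Set.range (w k)) ∧ ∃ r : ℝ, ∀ j, dist (q k) (w k j) = r) ∧
        ∀ c : H, c ∈ affineSpan ℝ (Set.range (w k)) →
          (∃ r : ℝ, ∀ j, dist c (w k j) = r) → c = q k) ∧
      Tendsto q atTop (nhds p) := by
  set v : Fin (t + 1) → H := Fin.cons (x 0) (fun j => x (idx j)) with hv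
  have hdv : ∀ j : Fin t, v j.succ - v 0 = x (idx j) - x 0 := fun j => by
    simp [hv]
  have hliv : LinearIndependent ℝ fun j : Fin t => v j.succ - v 0 := by
    have : (fun j : Fin t => v j.succ - v 0) = fun j : Fin t => x (idx j) - x 0 :=
      funext hdv
    rw [this]; exact hli
  have hU : IsUnit (ccGram v) := ccGram_isUnit hliv
  have hdet : (ccGram v).det ≠ 0 := ((Matrix.isUnit_iff_isUnit_det _).mp hU).ne_zero
  have htd : Tendsto (fun k => (ccGram (w k)).det) atTop (nhds ((ccGram v).det)) :=
    ((ccGram_continuous.matrix_det).tendsto v).comp hw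
  have hev : ∀ᶠ k in atTop, (ccGram (w k)).det ≠ 0 := htd.eventually_ne hdet
  obtain ⟨N, hN⟩ := eventually_atTop.mp hev
  refine ⟨N, fun k => ccC (w k), fun k hk => ?_, ?_⟩
  · have hdk := hN k hk
    have hlik := ccLi_of_det_ne_zero hdk
    have hUk : IsUnit (ccGram (w k)) :=
      (Matrix.isUnit_iff_isUnit_det _).mpr (isUnit_iff_ne_zero.mpr hdk)
    exact ⟨affineIndependent_of_li hlik,
      ⟨ccC_mem (w k), ⟨dist (ccC (w k)) (w k 0), dist_ccC hUk⟩⟩,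
      fun c hc hrc => cc_unique hc (ccC_mem (w k)) hrc ⟨_, dist_ccC hUk⟩⟩
  · have htend : Tendsto (fun k => ccC (w k)) atTop (nhds (ccC v)) :=
      (ccC_continuousAt hU).tendsto.comp hw
    have haff : affineSpan ℝ (Set.range v) = affineSpan ℝ (Set.range x) := by
      apply AffineSubspace.ext_of_direction_eq
      · rw [direction_affineSpan, direction_affineSpan, vectorSpan_range_succ v,
          vectorSpan_range_succ x]
        have : (fun j : Fin t => v j.succ - v 0) = fun j : Fin t => x (idx j) - x 0 :=
          funext hdv
        rw [this]; exact hsp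
      · refine ⟨x 0, ?_, mem_affineSpan ℝ ⟨0, rfl⟩⟩
        exact mem_affineSpan ℝ ⟨0, by simp [hv]⟩
    have hp' : p ∈ affineSpan ℝ (Set.range v) := haff ▸ hp
    obtain ⟨r, hr⟩ := hpr
    have hpr' : ∀ j, dist p (v j) = r := fun j => by
      refine Fin.cases ?_ (fun i => ?_) j
      · simpa [hv] using hr 0
      · simpa [hv] using hr (idx i)
    have hpc : p = ccC v :=
      cc_unique hp' (ccC_mem v) ⟨r, hpr'⟩ ⟨_, dist_ccC hU⟩
    rw [hpc]
    exact htend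
end

section
/- Let x₁, …, xₘ be affinely independent points of a real Hilbert space H, and let their (unique) circumcenter be p. Let ((x₁^{(k)}, …, xₘ^{(k)}))_{k ∈ ℕ} be a sequence in Hᵐ converging to (x₁, …, xₘ). Then for all sufficiently large k the points x₁^{(k)}, …, xₘ^{(k)} are affinely independent, so their circumcenter p_k exists and is unique, and p_k → p as k → ∞. In particular, the map sending an affinely independent m-tuple to its circumcenter is continuous at every affinely independent tuple. -/
open Filter Matrix

noncomputable section CircAux

variable {H : Type*} [NormedAddCommGroup H] [InnerProductSpace ℝ H]

def vdiff (n : ℕ) (y : Fin (n+1) → H) (i : Fin n) : H := y i.succ - y 0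

def gram (n : ℕ) (y : Fin (n+1) → H) : Matrix (Fin n) (Fin n) ℝ :=
  Matrix.of fun i j => inner ℝ (vdiff n y i) (vdiff n y j)

def dd (n : ℕ) (y : Fin (n+1) → H) (i : Fin n) : ℝ := ‖vdiff n y i‖^2 / 2

def circF (n : ℕ) (y : Fin (n+1) → H) : H :=
  y 0 + ((gram n y).det)⁻¹ •
    ∑ j, ((gram n y).adjugate.mulVec (dd n y)) j • vdiff n y j

lemma gram_mulVec (n : ℕ) (y : Fin (n+1) → H) (g : Fin n → ℝ) (i : Fin n) :
    (gram n y).mulVec g i = inner ℝ (vdiff n y i) (∑ j, g j • vdiff n y j) := by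
  simp [Matrix.mulVec, dotProduct, _root_.gram, inner_sum, real_inner_smul_right, mul_comm]

lemma det_gram_ne_zero_iff (n : ℕ) (y : Fin (n+1) → H) :
    (gram n y).det ≠ 0 ↔ LinearIndependent ℝ (vdiff n y) := by
  rw [Fintype.linearIndependent_iff]
  constructor
  · intro hdet g hg i
    by_contra hne
    have hmv : (gram n y).mulVec g = 0 := by
      funext i
      rw [gram_mulVec, hg, inner_zero_right]
      rfl
    exact hdet ((Matrix.exists_mulVec_eq_zero_iff).1 ⟨g, fun h => hne (by simp [h]), hmv⟩)
  · intro hli hdet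
    obtain ⟨g, hg0, hmv⟩ := (Matrix.exists_mulVec_eq_zero_iff).2 hdet
    have hz : (∑ j, g j • vdiff n y j) = 0 := by
      have : inner ℝ (∑ i, g i • vdiff n y i) (∑ j, g j • vdiff n y j) = (0:ℝ) := by
        rw [sum_inner]
        refine Finset.sum_eq_zero fun i _ => ?_
        rw [real_inner_smul_left, ← gram_mulVec, hmv]
        simp
      exact inner_self_eq_zero.1 this
    exact hg0 (funext fun i => hli g hz i)

lemma affineIndependent_iff_det (n : ℕ) (y : Fin (n+1) → H) :
    AffineIndependent ℝ y ↔ (gram n y).det ≠ 0 := by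
  rw [det_gram_ne_zero_iff, affineIndependent_iff_linearIndependent_vsub ℝ y 0]
  let e : {x : Fin (n+1) // x ≠ 0} ≃ Fin n :=
    { toFun := fun i => i.1.pred i.2
      invFun := fun j => ⟨j.succ, j.succ_ne_zero⟩
      left_inv := fun i => by simp
      right_inv := fun j => by simp }
  rw [← linearIndependent_equiv e (f := vdiff n y)]
  have : (vdiff n y) ∘ e = fun i : {x : Fin (n+1) // x ≠ 0} => (y i -ᵥ y 0 : H) := by
    funext i
    simp [vdiff, e, Fin.succ_pred]
  rw [this]

lemma inner_circF (n : ℕ) (y : Fin (n+1) → H) (hdet : (gram n y).det ≠ 0) (i : Fin n) :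
    inner ℝ (vdiff n y i) (circF n y - y 0) = dd n y i := by
  have h1 : circF n y - y 0
      = ∑ j, (((gram n y).det)⁻¹ • ((gram n y).adjugate.mulVec (dd n y))) j • vdiff n y j := by
    simp [circF, Finset.smul_sum, smul_smul, Pi.smul_apply]
  rw [h1, ← gram_mulVec, Matrix.mulVec_smul, Matrix.mulVec_mulVec, Matrix.mul_adjugate]
  simp [Matrix.smul_mulVec, smul_smul, ← mul_assoc, inv_mul_cancel₀ hdet]

lemma twoinner_of_dist_eq (n : ℕ) (y : Fin (n+1) → H) (c : H) {r : ℝ}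
    (h : ∀ i, dist c (y i) = r) (i : Fin n) :
    inner ℝ (vdiff n y i) (c - y 0) = dd n y i := by
  have h0 : ‖c - y 0‖ ^ 2 = r ^ 2 := by rw [← dist_eq_norm, h 0]
  have hi : ‖(c - y 0) - vdiff n y i‖ ^ 2 = r ^ 2 := by
    have : (c - y 0) - vdiff n y i = c - y i.succ := by simp only [vdiff]; abel
    rw [this, ← dist_eq_norm, h i.succ]
  rw [norm_sub_sq_real, h0] at hi
  have : inner ℝ (c - y 0) (vdiff n y i) = dd n y i := by
    simp only [dd]; linarith
  rw [real_inner_comm]; exact this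

lemma circF_mem (n : ℕ) (y : Fin (n+1) → H) :
    circF n y ∈ affineSpan ℝ (Set.range y) := by
  have h0 : y 0 ∈ affineSpan ℝ (Set.range y) := mem_affineSpan ℝ ⟨0, rfl⟩
  have hd : ((gram n y).det)⁻¹ •
      (∑ j, ((gram n y).adjugate.mulVec (dd n y)) j • vdiff n y j)
      ∈ (affineSpan ℝ (Set.range y)).direction := by
    refine Submodule.smul_mem _ _ (Submodule.sum_mem _ fun j _ => Submodule.smul_mem _ _ ?_)
    have : vdiff n y j = y j.succ -ᵥ y 0 := rfl
    rw [this]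
    exact AffineSubspace.vsub_mem_direction (mem_affineSpan ℝ ⟨j.succ, rfl⟩) h0
  have := AffineSubspace.vadd_mem_of_mem_direction hd h0
  simpa [circF, vadd_eq_add, add_comm] using this

lemma dist_circF (n : ℕ) (y : Fin (n+1) → H) (hdet : (gram n y).det ≠ 0) :
    ∀ i, dist (circF n y) (y i) = ‖circF n y - y 0‖ := by
  intro i
  rcases Fin.eq_zero_or_eq_succ i with h | ⟨j, rfl⟩
  · rw [h, dist_eq_norm]
  · rw [dist_eq_norm]
    have hsub : circF n y - y j.succ = (circF n y - y 0) - vdiff n y j := by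
      simp only [vdiff]; abel
    rw [hsub]
    have hsq : ‖(circF n y - y 0) - vdiff n y j‖ ^ 2 = ‖circF n y - y 0‖ ^ 2 := by
      rw [norm_sub_sq_real]
      have := inner_circF n y hdet j
      rw [real_inner_comm] at this
      rw [this]
      simp [dd]; ring
    have := congrArg Real.sqrt hsq
    rwa [Real.sqrt_sq (norm_nonneg _), Real.sqrt_sq (norm_nonneg _)] at this

lemma circ_unique (n : ℕ) (y : Fin (n+1) → H) (c₁ c₂ : H)
    (h₁ : c₁ ∈ affineSpan ℝ (Set.range y)) (h₂ : c₂ ∈ affineSpan ℝ (Set.range y))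
    {r₁ r₂ : ℝ} (hd₁ : ∀ i, dist c₁ (y i) = r₁) (hd₂ : ∀ i, dist c₂ (y i) = r₂) :
    c₁ = c₂ := by
  set w := c₁ - c₂ with hw
  have hwmem : w ∈ vectorSpan ℝ (Set.range y) := by
    rw [← direction_affineSpan]
    exact AffineSubspace.vsub_mem_direction h₁ h₂
  have horth : ∀ i, inner ℝ (y i -ᵥ y 0 : H) w = (0:ℝ) := by
    intro i
    rcases Fin.eq_zero_or_eq_succ i with hi | ⟨j, rfl⟩
    · simp [hi]
    · have e1 := twoinner_of_dist_eq n y c₁ hd₁ j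
      have e2 := twoinner_of_dist_eq n y c₂ hd₂ j
      have : inner ℝ (vdiff n y j) w = (0:ℝ) := by
        have : inner ℝ (vdiff n y j) (c₁ - y 0) - inner ℝ (vdiff n y j) (c₂ - y 0) = (0:ℝ) := by
          rw [e1, e2]; ring
        rw [← inner_sub_right] at this
        have hww : (c₁ - y 0) - (c₂ - y 0) = w := by rw [hw]; abel
        rwa [hww] at this
      simpa [vdiff, vsub_eq_sub] using this
  have : w ∈ (ℝ ∙ w)ᗮ := by
    have hle : vectorSpan ℝ (Set.range y) ≤ (ℝ ∙ w)ᗮ := by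
      rw [vectorSpan_range_eq_span_range_vsub_right ℝ y 0]
      rw [Submodule.span_le]
      rintro z ⟨i, rfl⟩
      exact Submodule.mem_orthogonal_singleton_iff_inner_left.2 (horth i)
    exact hle hwmem
  have : inner ℝ w w = (0:ℝ) :=
    this w (Submodule.mem_span_singleton_self w)
  have : w = 0 := inner_self_eq_zero.1 this
  exact sub_eq_zero.1 this

lemma continuous_det_gram (n : ℕ) :
    Continuous fun y : Fin (n+1) → H => (gram n y).det := by
  have hv : ∀ j : Fin n, Continuous fun y : Fin (n+1) → H => vdiff n y j := fun j =>
    (continuous_apply j.succ).sub (continuous_apply 0)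
  exact (continuous_matrix fun i j => (hv i).inner (hv j)).matrix_det

lemma continuousAt_circF (n : ℕ) (x : Fin (n+1) → H) (hdet : (gram n x).det ≠ 0) :
    ContinuousAt (circF n) x := by
  have hv : ∀ j : Fin n, Continuous fun y : Fin (n+1) → H => vdiff n y j := fun j =>
    (continuous_apply j.succ).sub (continuous_apply 0)
  have hg : Continuous fun y : Fin (n+1) → H => gram n y :=
    continuous_matrix fun i j => (hv i).inner (hv j)
  have hdd : Continuous fun y : Fin (n+1) → H => dd n y :=
    continuous_pi fun i => (((hv i).norm.pow 2).div_const 2)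
  have hsum : Continuous fun y : Fin (n+1) → H =>
      ∑ j, ((gram n y).adjugate.mulVec (dd n y)) j • vdiff n y j :=
    continuous_finset_sum _ fun j _ =>
      (((continuous_apply j).comp (hg.matrix_adjugate.matrix_mulVec hdd))).smul (hv j)
  have hinv : ContinuousAt (fun y : Fin (n+1) → H => ((gram n y).det)⁻¹) x :=
    (continuous_det_gram n).continuousAt.inv₀ hdet
  exact (continuous_apply 0).continuousAt.add (hinv.smul hsum.continuousAt)

end CircAux

/-- Let `x : Fin m → H` be affinely independent points of a real Hilbert
space with circumcenter `p`, and let `xs k → x` in `Hᵐ`.  Then for all sufficiently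
large `k` the points `xs k` are affinely independent, so their circumcenter `q k` exists
and is unique, and `q k → p`.  In particular, the circumcenter map is continuous at
every affinely independent tuple. -/
theorem circumcenter_continuous_at_affineIndependent {H : Type*} [NormedAddCommGroup H]
    [InnerProductSpace ℝ H] [CompleteSpace H] (m : ℕ) (x : Fin m → H)
    (hx : AffineIndependent ℝ x) (p : H)
    (hp : p ∈ affineSpan ℝ (Set.range x)) (hpr : ∃ r : ℝ, ∀ i, dist p (x i) = r)
    (xs : ℕ → Fin m → H) (hconv : Tendsto xs atTop (nhds x)) :
    ∃ N : ℕ, ∃ q : ℕ → H,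
      (∀ k ≥ N, AffineIndependent ℝ (xs k) ∧
        (q k ∈ affineSpan ℝ (Set.range (xs k)) ∧ ∃ r : ℝ, ∀ i, dist (q k) (xs k i) = r) ∧
        ∀ c : H, c ∈ affineSpan ℝ (Set.range (xs k)) →
          (∃ r : ℝ, ∀ i, dist c (xs k i) = r) → c = q k) ∧
      Tendsto q atTop (nhds p) := by
  obtain _ | n := m
  · exfalso
    rw [Set.range_eq_empty, AffineSubspace.span_empty] at hp
    exact hp
  -- det of the Gram matrix at x is nonzero
  have hdx : (gram n x).det ≠ 0 := (affineIndependent_iff_det n x).1 hx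
  -- p equals circF n x
  obtain ⟨r, hr⟩ := hpr
  have hpF : p = circF n x :=
    circ_unique n x p (circF n x) hp (circF_mem n x) hr (dist_circF n x hdx)
  -- eventually det nonzero
  have hdtend : Tendsto (fun k => (gram n (xs k)).det) atTop (nhds ((gram n x).det)) :=
    ((continuous_det_gram n).continuousAt.tendsto).comp hconv
  have hev : ∀ᶠ k in atTop, (gram n (xs k)).det ≠ 0 := hdtend.eventually_ne hdx
  obtain ⟨N, hN⟩ := eventually_atTop.1 hev
  refine ⟨N, fun k => circF n (xs k), fun k hk => ?_, ?_⟩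
  · have hdk := hN k hk
    refine ⟨(affineIndependent_iff_det n (xs k)).2 hdk,
      ⟨circF_mem n (xs k), ⟨_, dist_circF n (xs k) hdk⟩⟩, ?_⟩
    rintro c hc ⟨rc, hrc⟩
    exact circ_unique n (xs k) c (circF n (xs k)) hc (circF_mem n (xs k)) hrc
      (dist_circF n (xs k) hdk)
  · rw [hpF]
    exact ((continuousAt_circF n x hdx).tendsto).comp hconv
end

section
/- Let x, y, z be pairwise distinct points of a real Hilbert space H. Then x, y, z are affinely independent if and only if there exists a point p ∈ aff{x, y, z} with ‖p − x‖ = ‖p − y‖ = ‖p − z‖ (i.e., if and only if the circumcenter of {x, y, z} exists). -/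
/-- Three pairwise distinct points `x, y, z` of a real Hilbert space are
affinely independent if and only if there is a point of `aff{x, y, z}` equidistant from
`x`, `y` and `z` (i.e. iff the circumcenter of `{x, y, z}` exists). -/
theorem affineIndependent_iff_circumcenter_exists {H : Type*} [NormedAddCommGroup H]
    [InnerProductSpace ℝ H] [CompleteSpace H] (x y z : H) (hxy : x ≠ y) (hyz : y ≠ z)
    (hxz : x ≠ z) :
    AffineIndependent ℝ ![x, y, z] ↔
      ∃ p : H, p ∈ affineSpan ℝ ({x, y, z} : Set H) ∧
        dist p x = dist p y ∧ dist p y = dist p z := by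
  have hr : Set.range ![x, y, z] = ({x, y, z} : Set H) := by
    ext w
    simp [Matrix.range_cons, Matrix.range_empty]
    tauto
  constructor
  · intro h
    obtain ⟨cs, ⟨hc, hs⟩, -⟩ := h.existsUnique_dist_eq
    rw [hr] at hc hs
    have hx : x ∈ (cs : Set H) := hs (by simp)
    have hy : y ∈ (cs : Set H) := hs (by simp)
    have hz : z ∈ (cs : Set H) := hs (by simp)
    rw [Metric.mem_sphere] at hx hy hz
    exact ⟨cs.center, hc, by rw [dist_comm, hx, dist_comm, hy],
      by rw [dist_comm, hy, dist_comm, hz]⟩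
  · rintro ⟨p, hp, h1, h2⟩
    rw [affineIndependent_iff_not_collinear_set]
    intro hcol
    have hcol' : Collinear ℝ (insert p ({x, y, z} : Set H)) :=
      (collinear_insert_iff_of_mem_affineSpan hp).2 hcol
    rw [collinear_iff_of_mem (Set.mem_insert p _)] at hcol'
    obtain ⟨v, hv⟩ := hcol'
    obtain ⟨a, ha⟩ := hv x (by simp)
    obtain ⟨b, hb⟩ := hv y (by simp)
    obtain ⟨c, hc⟩ := hv z (by simp)
    have hdx : dist p x = |a| * ‖v‖ := by
      rw [ha]; simp [dist_eq_norm, norm_smul]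
    have hdy : dist p y = |b| * ‖v‖ := by
      rw [hb]; simp [dist_eq_norm, norm_smul]
    have hdz : dist p z = |c| * ‖v‖ := by
      rw [hc]; simp [dist_eq_norm, norm_smul]
    have hv0 : v ≠ 0 := by
      rintro rfl
      apply hxy
      rw [ha, hb]; simp
    have hvn : ‖v‖ ≠ 0 := norm_ne_zero_iff.2 hv0
    have hab : a ≠ b := by
      rintro rfl; exact hxy (by rw [ha, hb])
    have hbc : b ≠ c := by
      rintro rfl; exact hyz (by rw [hb, hc])
    have hac : a ≠ c := by
      rintro rfl; exact hxz (by rw [ha, hc])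
    have e1 : |a| = |b| := by
      have := h1; rw [hdx, hdy] at this
      exact mul_right_cancel₀ hvn this
    have e2 : |b| = |c| := by
      have := h2; rw [hdy, hdz] at this
      exact mul_right_cancel₀ hvn this
    have h1' : a = -b := (abs_eq_abs.1 e1).resolve_left hab
    have h2' : b = -c := (abs_eq_abs.1 e2).resolve_left hbc
    exact hac (by rw [h1', h2', neg_neg])
end

section
/- Let x, y, z be affinely independent points of a real Hilbert space H. Then the denominator D = 2(‖y − x‖²‖z − x‖² − ⟨y − x, z − x⟩²) is nonzero, and the point p = (‖y − z‖² ⟨x − z, x − y⟩ x + ‖x − z‖² ⟨y − z, y − x⟩ y + ‖x − y‖² ⟨z − x, z − y⟩ z) / D lies in aff{x, y, z} and satisfies ‖p − x‖ = ‖p − y‖ = ‖p − z‖; that is, p is the circumcenter of {x, y, z}. -/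
open RealInnerProductSpace

private lemma norm_comb_eq {H : Type*} [NormedAddCommGroup H] [InnerProductSpace ℝ H]
    (u v : H) (s t s' t' : ℝ)
    (h : s^2*‖u‖^2 + 2*(s*t)*⟪u,v⟫ + t^2*‖v‖^2
       = s'^2*‖u‖^2 + 2*(s'*t')*⟪u,v⟫ + t'^2*‖v‖^2) :
    ‖s • u + t • v‖ = ‖s' • u + t' • v‖ := by
  have key : ∀ a b : ℝ, ‖a • u + b • v‖ ^ 2
      = a^2*‖u‖^2 + 2*(a*b)*⟪u,v⟫ + b^2*‖v‖^2 := by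
    intro a b
    rw [← real_inner_self_eq_norm_sq]
    simp only [inner_add_left, inner_add_right, real_inner_smul_left, real_inner_smul_right]
    simp only [real_inner_self_eq_norm_sq, real_inner_comm v u]
    ring
  have h1 := key s t
  have h2 := key s' t'
  nlinarith [norm_nonneg (s • u + t • v), norm_nonneg (s' • u + t' • v)]

private lemma dep_of_cs_eq {H : Type*} [NormedAddCommGroup H] [InnerProductSpace ℝ H]
    (u v : H) (hu : u ≠ 0) (heq : ⟪u,v⟫ ^ 2 = ‖u‖ ^ 2 * ‖v‖ ^ 2) :
    ∃ c : ℝ, v = c • u := by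
  have hE : (0:ℝ) < ‖u‖ ^ 2 := by
    have : (0:ℝ) < ‖u‖ := norm_pos_iff.mpr hu
    positivity
  have hw : (‖u‖ ^ 2) • v - ⟪u,v⟫ • u = 0 := by
    have h0 : ⟪(‖u‖ ^ 2) • v - ⟪u,v⟫ • u, (‖u‖ ^ 2) • v - ⟪u,v⟫ • u⟫
        = ‖u‖^2 * (‖u‖^2 * ‖v‖^2 - ⟪u,v⟫^2) := by
      simp only [inner_sub_left, inner_sub_right, real_inner_smul_left, real_inner_smul_right]
      simp only [real_inner_self_eq_norm_sq, real_inner_comm v u]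
      ring
    rw [heq, sub_self, mul_zero] at h0
    exact inner_self_eq_zero.mp h0
  have h1 : (‖u‖ ^ 2) • v = ⟪u,v⟫ • u := sub_eq_zero.mp hw
  refine ⟨⟪u,v⟫ / ‖u‖ ^ 2, ?_⟩
  rw [div_eq_inv_mul, mul_smul, ← h1, inv_smul_smul₀ (ne_of_gt hE)]

private lemma coeffA {H : Type*} [NormedAddCommGroup H] [InnerProductSpace ℝ H] (u v : H) :
    ‖u - v‖ ^ 2 * ⟪-v, -u⟫ = (‖u‖^2 - 2*⟪u,v⟫ + ‖v‖^2) * ⟪u,v⟫ := by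
  rw [inner_neg_neg, norm_sub_sq_real, real_inner_comm v u]

private lemma coeffB {H : Type*} [NormedAddCommGroup H] [InnerProductSpace ℝ H] (u v : H) :
    ‖-v‖ ^ 2 * ⟪u - v, u⟫ = ‖v‖^2 * (‖u‖^2 - ⟪u,v⟫) := by
  rw [norm_neg, inner_sub_left, real_inner_self_eq_norm_sq, real_inner_comm v u]

private lemma coeffC {H : Type*} [NormedAddCommGroup H] [InnerProductSpace ℝ H] (u v : H) :
    ‖-u‖ ^ 2 * ⟪v, -(u - v)⟫ = ‖u‖^2 * (‖v‖^2 - ⟪u,v⟫) := by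
  rw [norm_neg, inner_neg_right, inner_sub_right, real_inner_self_eq_norm_sq,
    real_inner_comm v u]
  ring

set_option maxHeartbeats 1000000 in
/-- For affinely independent points `x, y, z` of a real Hilbert space,
the denominator `D = 2(‖y − x‖²‖z − x‖² − ⟨y − x, z − x⟩²)` is nonzero and the point
`p = D⁻¹ (‖y − z‖² ⟨x − z, x − y⟩ x + ‖x − z‖² ⟨y − z, y − x⟩ y + ‖x − y‖² ⟨z − x, z − y⟩ z)`
lies in `aff{x, y, z}` and is equidistant from `x`, `y`, `z`; i.e. `p` is the
circumcenter of `{x, y, z}`. -/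
theorem circumcenter_three_points_formula {H : Type*} [NormedAddCommGroup H]
    [InnerProductSpace ℝ H] [CompleteSpace H] (x y z : H)
    (hx : AffineIndependent ℝ ![x, y, z])
    (D : ℝ) (hD : D = 2 * (‖y - x‖ ^ 2 * ‖z - x‖ ^ 2 - ⟪y - x, z - x⟫ ^ 2))
    (p : H)
    (hp : p = D⁻¹ • ((‖y - z‖ ^ 2 * ⟪x - z, x - y⟫) • x +
      (‖x - z‖ ^ 2 * ⟪y - z, y - x⟫) • y + (‖x - y‖ ^ 2 * ⟪z - x, z - y⟫) • z)) :
    D ≠ 0 ∧ p ∈ affineSpan ℝ ({x, y, z} : Set H) ∧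
      dist p x = dist p y ∧ dist p y = dist p z := by
  have hyx : y - x ≠ 0 := by
    intro h
    have h' : ![x, y, z] 1 = ![x, y, z] 0 := by simpa using sub_eq_zero.mp h
    exact (by norm_num : (1 : Fin 3) ≠ 0) (hx.injective h')
  have hncol : ¬ Collinear ℝ ({x, y, z} : Set H) :=
    affineIndependent_iff_not_collinear_set.mp hx
  -- strict Cauchy–Schwarz
  have hCS : ⟪y - x, z - x⟫ ^ 2 ≤ ‖y - x‖ ^ 2 * ‖z - x‖ ^ 2 := by
    have h1 := abs_real_inner_le_norm (y - x) (z - x)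
    nlinarith [abs_nonneg ⟪y - x, z - x⟫, sq_abs ⟪y - x, z - x⟫,
      norm_nonneg (y - x), norm_nonneg (z - x)]
  have hne : ⟪y - x, z - x⟫ ^ 2 ≠ ‖y - x‖ ^ 2 * ‖z - x‖ ^ 2 := by
    intro heq
    apply hncol
    obtain ⟨c, hc⟩ := dep_of_cs_eq (y - x) (z - x) hyx heq
    rw [collinear_iff_exists_forall_eq_smul_vadd]
    refine ⟨x, y - x, ?_⟩
    intro q hq
    simp only [Set.mem_insert_iff, Set.mem_singleton_iff] at hq
    rcases hq with rfl | rfl | rfl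
    · exact ⟨0, by simp⟩
    · exact ⟨1, by simp⟩
    · refine ⟨c, ?_⟩
      rw [vadd_eq_add, ← hc]
      abel
  have hD0 : D ≠ 0 := by
    rw [hD]
    intro h
    exact hne (by linarith)
  -- coefficients
  set A := ‖y - z‖ ^ 2 * ⟪x - z, x - y⟫ with hA
  set B := ‖x - z‖ ^ 2 * ⟪y - z, y - x⟫ with hB
  set C := ‖x - y‖ ^ 2 * ⟪z - x, z - y⟫ with hC
  have e1 : y - z = (y - x) - (z - x) := by abel
  have e2 : x - z = -(z - x) := by abel
  have e3 : x - y = -(y - x) := by abel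
  have e4 : z - y = -((y - x) - (z - x)) := by abel
  have hA' : A = (‖y - x‖^2 - 2*⟪y - x, z - x⟫ + ‖z - x‖^2) * ⟪y - x, z - x⟫ := by
    rw [hA, e1, e2, e3]; exact coeffA (y - x) (z - x)
  have hB' : B = ‖z - x‖^2 * (‖y - x‖^2 - ⟪y - x, z - x⟫) := by
    rw [hB, e1, e2]; exact coeffB (y - x) (z - x)
  have hC' : C = ‖y - x‖^2 * (‖z - x‖^2 - ⟪y - x, z - x⟫) := by
    rw [hC, e3, e4]; exact coeffC (y - x) (z - x)
  have hsum : A + B + C = D := by rw [hA', hB', hC', hD]; ring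
  have hAeq : A = D - B - C := by linarith
  -- vector identities
  have hpx : p - x = (D⁻¹*B) • (y - x) + (D⁻¹*C) • (z - x) := by
    rw [hp, hAeq]
    match_scalars <;> field_simp <;> ring
  have hpy : p - y = (D⁻¹*(B - D)) • (y - x) + (D⁻¹*C) • (z - x) := by
    have h5 : p - y = (p - x) - (y - x) := by abel
    rw [h5, hpx]
    match_scalars <;> field_simp <;> ring
  have hpz : p - z = (D⁻¹*B) • (y - x) + (D⁻¹*(C - D)) • (z - x) := by
    have h5 : p - z = (p - x) - (z - x) := by abel
    rw [h5, hpx]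
    match_scalars <;> field_simp <;> ring
  refine ⟨hD0, ?_, ?_, ?_⟩
  · have hmem : p = ((D⁻¹*B) • (y - x) + (D⁻¹*C) • (z - x)) +ᵥ x := by
      rw [vadd_eq_add]
      exact sub_eq_iff_eq_add.mp hpx
    rw [hmem]
    apply AffineSubspace.vadd_mem_of_mem_direction
    · rw [direction_affineSpan]
      apply Submodule.add_mem <;> apply Submodule.smul_mem
      · have h6 := vsub_mem_vectorSpan ℝ (show y ∈ ({x,y,z} : Set H) by simp)
          (show x ∈ ({x,y,z} : Set H) by simp)
        simpa using h6
      · have h6 := vsub_mem_vectorSpan ℝ (show z ∈ ({x,y,z} : Set H) by simp)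
          (show x ∈ ({x,y,z} : Set H) by simp)
        simpa using h6
    · exact mem_affineSpan ℝ (by simp)
  · rw [dist_eq_norm, dist_eq_norm, hpx, hpy]
    apply norm_comb_eq
    rw [hB', hC', hD]
    field_simp
    ring
  · rw [dist_eq_norm, dist_eq_norm, hpy, hpz]
    apply norm_comb_eq
    rw [hB', hC', hD]
    field_simp
    ring
end
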